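/- Let w ∈ ℝⁿ. Define recursively ε₀ = w and, for i ≥ 1, βᵢ = sign(ε_{i−1}) and εᵢ = w − Pᵢ w, where Pᵢ is the orthogonal projection of ℝⁿ onto span{β₁, …, βᵢ}. If ε_{i−1} ≠ 0 for every 1 ≤ i ≤ I, then the vectors β₁, …, β_I are linearly independent; consequently the Gram matrix BᵀB of the matrix B = [β₁ ⋯ β_I] ∈ {−1,+1}^{n×I} is invertible. -/

import Mathlib

open Matrix

/-- The coordinatewise sign vector: `signVec ε j = 1` if `ε j ≥ 0`, and `-1` otherwise. -/
noncomputable def signVec {n : ℕ} (ε : EuclideanSpace ℝ (Fin n)) : EuclideanSpace ℝ (Fin n) :=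
  WithLp.toLp 2 (fun j => if 0 ≤ ε j then 1 else -1)

/-- ALQ structured sketching: starting from `ε 0 = w`, taking `β i = sign (ε i)` and
`ε (i+1) = w - P w` with `P` the orthogonal projection onto `span {β 0, …, β i}`
(0-based indexing of the paper's `β₁, …, β_I` and `ε₀, …, ε_{I-1}`), if all residuals
`ε 0, …, ε (I-1)` are nonzero then `β 0, …, β (I-1)` are linearly independent and the
Gram matrix `BᵀB` of `B = [β₁ ⋯ β_I] ∈ {−1,+1}^{n×I}` is invertible. -/
theorem alq_sketching_linearIndependent {n I : ℕ} (w : EuclideanSpace ℝ (Fin n))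
    (ε : ℕ → EuclideanSpace ℝ (Fin n)) (β : Fin I → EuclideanSpace ℝ (Fin n))
    (hε0 : ε 0 = w)
    (hβ : ∀ i : Fin I, β i = signVec (ε i.1))
    (hεrec : ∀ i : Fin I, ε (i.1 + 1) =
      w - (Submodule.orthogonalProjectionOnto (Submodule.span ℝ (β '' {j : Fin I | j ≤ i})) w :
        EuclideanSpace ℝ (Fin n)))
    (hne : ∀ i : Fin I, ε i.1 ≠ 0) :
    LinearIndependent ℝ β ∧
      IsUnit ((Matrix.of (fun (j : Fin n) (i : Fin I) => β i j))ᵀ *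
        (Matrix.of (fun (j : Fin n) (i : Fin I) => β i j))) := by
  classical
  -- positivity: ⟪β i, ε i⟫ > 0
  have hpos : ∀ i : Fin I, 0 < (inner ℝ (β i) (ε i.1) : ℝ) := by
    intro i
    rw [hβ i, PiLp.inner_apply]
    have hcoord : ∀ j : Fin n, (inner ℝ (signVec (ε i.1) j) ((ε i.1) j) : ℝ) = |(ε i.1) j| := by
      intro j
      simp only [RCLike.inner_apply, starRingEnd_apply, star_trivial, signVec, WithLp.ofLp_toLp]
      by_cases h : 0 ≤ (ε i.1) j
      · rw [if_pos h]; simp [abs_of_nonneg h]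
      · rw [if_neg h]; simp [abs_of_neg (lt_of_not_ge h)]
    simp_rw [hcoord]
    obtain ⟨j, hj⟩ : ∃ j, (ε i.1) j ≠ 0 := by
      by_contra h
      push_neg at h
      exact hne i (by ext j; exact h j)
    exact Finset.sum_pos' (fun j _ => abs_nonneg _)
      ⟨j, Finset.mem_univ j, abs_pos.mpr hj⟩
  -- orthogonality: for j < i, ⟪β j, ε i⟫ = 0
  have horth : ∀ i j : Fin I, j < i → (inner ℝ (β j) (ε i.1) : ℝ) = 0 := by
    intro i j hji
    have hi1 : 0 < i.1 := lt_of_le_of_lt (Nat.zero_le _) hji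
    set i' : Fin I := ⟨i.1 - 1, lt_of_le_of_lt (Nat.sub_le _ _) i.2⟩ with hi'
    have hstep : i'.1 + 1 = i.1 := Nat.succ_pred_eq_of_pos hi1
    have hεi : ε i.1 = w - (Submodule.orthogonalProjectionOnto
        (Submodule.span ℝ (β '' {k : Fin I | k ≤ i'})) w : EuclideanSpace ℝ (Fin n)) := by
      rw [← hstep]; exact hεrec i'
    have hmem : ε i.1 ∈ (Submodule.span ℝ (β '' {k : Fin I | k ≤ i'}))ᗮ := by
      rw [hεi]
      exact Submodule.sub_starProjection_mem_orthogonal w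
    have hβj : β j ∈ Submodule.span ℝ (β '' {k : Fin I | k ≤ i'}) := by
      apply Submodule.subset_span
      refine ⟨j, ?_, rfl⟩
      show j ≤ i'
      have : j.1 ≤ i.1 - 1 := Nat.le_pred_of_lt hji
      exact this
    exact hmem (β j) hβj
  -- linear independence
  have hli : LinearIndependent ℝ β := by
    rw [Fintype.linearIndependent_iff]
    intro g hg
    by_contra hcon
    push_neg at hcon
    obtain ⟨i0, hi0⟩ := hcon
    set S : Finset (Fin I) := Finset.univ.filter (fun i => g i ≠ 0) with hS
    have hSne : S.Nonempty := ⟨i0, by simp [hS, hi0]⟩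
    set i := S.max' hSne with hi
    have hgi : g i ≠ 0 := (Finset.mem_filter.mp (S.max'_mem hSne)).2
    have hzero : (inner ℝ (∑ k, g k • β k) (ε i.1) : ℝ) = 0 := by
      rw [hg, inner_zero_left]
    rw [sum_inner] at hzero
    have hsingle : ∑ k, (inner ℝ (g k • β k) (ε i.1) : ℝ) = g i * inner ℝ (β i) (ε i.1) := by
      rw [Finset.sum_eq_single i]
      · rw [real_inner_smul_left]
      · intro k _ hk
        rcases eq_or_ne (g k) 0 with h0 | h0
        · rw [real_inner_smul_left, h0, zero_mul]
        · have hkS : k ∈ S := Finset.mem_filter.mpr ⟨Finset.mem_univ _, h0⟩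
          have hki : k < i := lt_of_le_of_ne (S.le_max' k hkS) hk
          rw [real_inner_smul_left, horth i k hki, mul_zero]
      · intro h; exact absurd (Finset.mem_univ i) h
    rw [hsingle] at hzero
    exact hgi (by
      rcases mul_eq_zero.mp hzero with h | h
      · exact h
      · exact absurd h (ne_of_gt (hpos i)))
  refine ⟨hli, ?_⟩
  -- Gram matrix is positive definite, hence a unit
  set B : Matrix (Fin n) (Fin I) ℝ := Matrix.of (fun (j : Fin n) (i : Fin I) => β i j) with hB
  have hposdef : (Bᵀ * B).PosDef := by
    rw [Matrix.posDef_iff_dotProduct_mulVec]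
    constructor
    · have := Matrix.isHermitian_conjTranspose_mul_self B
      simpa using this
    · intro x hx
      have hBx : B *ᵥ x ≠ 0 := by
        intro hBx0
        apply hx
        have hsum : ∑ k, x k • β k = 0 := by
          ext j
          have := congrFun hBx0 j
          have h2 : (∑ k, x k • β k) j = ∑ k, β k j * x k := by
            have h3 : (∑ k, x k • β k) j = ∑ k, (x k • β k) j :=
              by rw [WithLp.ofLp_sum, Finset.sum_apply]
            rw [h3]; simp [mul_comm]
          rw [h2]
          simpa [Matrix.mulVec, dotProduct, hB] using this
        funext k
        exact Fintype.linearIndependent_iff.mp hli x hsum k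
      have hcalc : dotProduct (star x) ((Bᵀ * B) *ᵥ x) = ∑ j, (B *ᵥ x) j * (B *ᵥ x) j := by
        rw [← Matrix.mulVec_mulVec, Matrix.dotProduct_mulVec]
        simp only [star_trivial]
        rw [Matrix.vecMul_transpose]
        rfl
      rw [hcalc]
      obtain ⟨j, hj⟩ : ∃ j, (B *ᵥ x) j ≠ 0 := by
        by_contra h
        push_neg at h
        exact hBx (funext h)
      exact Finset.sum_pos' (fun j _ => mul_self_nonneg _)
        ⟨j, Finset.mem_univ j, mul_self_pos.mpr hj⟩
  exact hposdef.isUnit
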